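/- If c is a binary word of length n and c·1 (c followed by digit 1) is greedy with last digit 1, then the equivalence class of c·1 has the same cardinality as the equivalence class of c: every word d of length n+1 with v(d) = v(c·1) ends in 1. -/

import Mathlib

noncomputable def phi : ℝ := (1 + Real.sqrt 5) / 2

/-- Value of a binary word in base φ. -/
noncomputable def val {n : ℕ} (c : Fin n → Fin 2) : ℝ :=
  ∑ i : Fin n, (c i : ℕ) / phi ^ ((i : ℕ) + 1)

/-- A binary word avoids the factor `011`. -/
def Greedy {n : ℕ} (c : Fin n → Fin 2) : Prop :=
  ∀ i j k : Fin n, (j : ℕ) = (i : ℕ) + 1 → (k : ℕ) = (i : ℕ) + 2 →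
    ¬ (c i = 0 ∧ c j = 1 ∧ c k = 1)

lemma sqrt5_lt : Real.sqrt 5 < 3 := by
  nlinarith [Real.sq_sqrt (by norm_num : (5:ℝ) ≥ 0), Real.sqrt_nonneg 5]

lemma one_lt_phi : 1 < phi := by
  have h : Real.sqrt 5 > 1 := by
    nlinarith [Real.sq_sqrt (by norm_num : (5:ℝ) ≥ 0), Real.sqrt_nonneg 5]
  unfold phi; linarith

lemma phi_pos : 0 < phi := lt_trans one_pos one_lt_phi

lemma phi_lt_two : phi < 2 := by
  have := sqrt5_lt; unfold phi; linarith

lemma phi_sq : phi ^ 2 = phi + 1 := by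
  have h : Real.sqrt 5 ^ 2 = 5 := Real.sq_sqrt (by norm_num)
  unfold phi; nlinarith

lemma phi_inv : 1 / phi = phi - 1 := by
  have h := phi_sq
  have h0 := phi_pos
  field_simp
  nlinarith

lemma fin2_cases (a : Fin 2) : a = 0 ∨ a = 1 := by omega

lemma val_empty (w : Fin 0 → Fin 2) : val w = 0 := by simp [val]

lemma val_cons {m : ℕ} (a : Fin 2) (w : Fin m → Fin 2) :
    val (Fin.cons a w) = (a : ℕ) / phi + val w / phi := by
  have h : ∀ i : Fin m, ((w i : ℕ) : ℝ) / phi ^ ((i:ℕ) + 1 + 1)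
      = ((w i : ℕ) : ℝ) / phi ^ ((i:ℕ) + 1) / phi := by
    intro i; rw [div_div, ← pow_succ]
  simp [val, Fin.sum_univ_succ, Finset.sum_div, h]

lemma val_snoc {m : ℕ} (w : Fin m → Fin 2) (b : Fin 2) :
    val (Fin.snoc w b) = val w + (b : ℕ) / phi ^ (m + 1) := by
  rw [val, Fin.sum_univ_castSucc]
  simp [val, Fin.snoc_castSucc, Fin.snoc_last]

lemma val_nonneg {m : ℕ} (w : Fin m → Fin 2) : 0 ≤ val w := by
  apply Finset.sum_nonneg
  intro i _
  have := phi_pos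
  positivity

lemma fin2_le (a : Fin 2) : ((a : ℕ) : ℝ) ≤ 1 := by
  have := a.isLt; exact_mod_cast Nat.lt_succ_iff.mp this

lemma val_lt_phi : ∀ {m : ℕ} (w : Fin m → Fin 2), val w < phi := by
  intro m
  induction m with
  | zero => intro w; rw [val_empty]; exact phi_pos
  | succ m ih =>
    intro w
    rw [← Fin.cons_self_tail w, val_cons]
    have h1 := ih (Fin.tail w)
    have h2 := fin2_le (w 0)
    have hp := phi_pos
    have hs := phi_sq
    rw [← add_div, div_lt_iff₀ hp]
    nlinarith

lemma greedy_tail {m : ℕ} (w : Fin (m+1) → Fin 2) (hw : Greedy w) :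
    Greedy (Fin.tail w) := by
  intro i j k hj hk h
  exact hw i.succ j.succ k.succ (by simp [hj]) (by simp only [Fin.val_succ]; omega) h

lemma val_one_word (w : Fin 1 → Fin 2) : val w = (w 0 : ℕ) / phi := by
  simp [val]

lemma tail_tail_zero {m : ℕ} (w : Fin (m+3) → Fin 2) :
    Fin.tail (Fin.tail w) 0 = w 2 := by congr 1

lemma tail_zero {m : ℕ} (w : Fin (m+2) → Fin 2) :
    Fin.tail w 0 = w 1 := by congr 1

lemma phi_mul_val_cons {m : ℕ} (a : Fin 2) (w : Fin m → Fin 2) :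
    phi * val (Fin.cons a w) = (a : ℕ) + val w := by
  have hp := phi_pos
  rw [val_cons]
  field_simp

lemma phi_mul_val {m : ℕ} (w : Fin (m+1) → Fin 2) :
    phi * val w = (w 0 : ℕ) + val (Fin.tail w) := by
  conv_lhs => rw [← Fin.cons_self_tail w]
  exact phi_mul_val_cons _ _

lemma greedy_zero_lt : ∀ m : ℕ, ∀ w : Fin (m+1) → Fin 2,
    Greedy w → w 0 = 0 → phi * val w < 1 := by
  intro m
  induction m using Nat.strong_induction_on with
  | _ m ih =>
    intro w hg h0
    have hp := phi_pos
    have hs := phi_sq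
    have h1 := one_lt_phi
    have hval : phi * val w = val (Fin.tail w) := by
      rw [phi_mul_val, h0]; simp
    match m with
    | 0 =>
      rw [hval]
      have : val (Fin.tail w) = 0 := val_empty _
      rw [this]; norm_num
    | Nat.succ m' =>
      have hval2 : phi * val (Fin.tail w) = (w 1 : ℕ) + val (Fin.tail (Fin.tail w)) := by
        rw [phi_mul_val, tail_zero]
      rcases fin2_cases (w 1) with ha | ha
      · have htz : Fin.tail w 0 = 0 := by rw [tail_zero]; exact ha
        have hlt := ih m' (by omega) (Fin.tail w) (greedy_tail w hg) htz
        have hv0 := val_nonneg (Fin.tail w)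
        rw [hval]
        nlinarith
      · match m' with
        | 0 =>
          have hval3 : val (Fin.tail (Fin.tail w)) = 0 := val_empty _
          rw [ha] at hval2
          rw [hval3] at hval2
          have hv0 := val_nonneg (Fin.tail w)
          rw [hval]
          norm_num at hval2
          nlinarith
        | Nat.succ m'' =>
          have h2 : w 2 = 0 := by
            have hgg := hg ⟨0, by omega⟩ ⟨1, by omega⟩ ⟨2, by omega⟩ rfl rfl
            have e0 : (⟨0, by omega⟩ : Fin (m''+3)) = 0 := by congr 1
            have e1 : (⟨1, by omega⟩ : Fin (m''+3)) = 1 := by congr 1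
            have e2 : (⟨2, by omega⟩ : Fin (m''+3)) = 2 := by congr 1
            rw [e0, e1, e2] at hgg
            rcases fin2_cases (w 2) with h | h
            · exact h
            · exact absurd ⟨h0, ha, h⟩ hgg
          have htz : Fin.tail (Fin.tail w) 0 = 0 := by rw [tail_tail_zero]; exact h2
          have hlt := ih m'' (by omega) (Fin.tail (Fin.tail w))
            (greedy_tail _ (greedy_tail w hg)) htz
          have hv0 := val_nonneg (Fin.tail (Fin.tail w))
          rw [ha] at hval2
          norm_num at hval2
          rw [hval]
          nlinarith

lemma tail_last {m : ℕ} (w : Fin (m+2) → Fin 2) :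
    Fin.tail w (Fin.last m) = w (Fin.last (m+1)) := by congr 1

lemma key : ∀ m : ℕ, ∀ w d : Fin (m+1) → Fin 2, Greedy w → w (Fin.last m) = 1 →
    ∀ t : ℝ, (t = 0 ∨ t = phi - 1 ∨ t = 1) → val d = t + val w →
    d (Fin.last m) = 1 := by
  intro m
  induction m with
  | zero =>
    intro w d hg hl t ht he
    have hp := phi_pos
    have h1 := one_lt_phi
    have hl0 : Fin.last 0 = (0 : Fin 1) := rfl
    rcases fin2_cases (d 0) with h | h
    · exfalso
      have hvd : val d = 0 := by rw [val_one_word, h]; norm_num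
      have hvw : val w = 1 / phi := by
        rw [val_one_word]
        rw [hl0] at hl
        rw [hl]
        norm_num
      have hpos : 0 < 1 / phi := div_pos one_pos hp
      rw [hvd, hvw] at he
      rcases ht with rfl | rfl | rfl <;> linarith
    · rw [hl0]; exact h
  | succ m ihm =>
    intro w d hg hl t ht he
    have hp := phi_pos
    have h1 := one_lt_phi
    have hs := phi_sq
    have h2 := phi_lt_two
    have hw' : Greedy (Fin.tail w) := greedy_tail w hg
    have hl' : Fin.tail w (Fin.last m) = 1 := by rw [tail_last]; exact hl
    have hde := phi_mul_val d
    have hwe := phi_mul_val w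
    have heq : ((d 0 : ℕ) : ℝ) + val (Fin.tail d) = phi * t + ((w 0 : ℕ) : ℝ) + val (Fin.tail w) := by
      have : phi * val d = phi * t + phi * val w := by rw [he]; ring
      rw [hde, hwe] at this
      linarith
    have step : ∀ t' : ℝ, (t' = 0 ∨ t' = phi - 1 ∨ t' = 1) →
        val (Fin.tail d) = t' + val (Fin.tail w) → d (Fin.last (m+1)) = 1 := by
      intro t' ht' he'
      rw [← tail_last d]
      exact ihm (Fin.tail w) (Fin.tail d) hw' hl' t' ht' he'
    have hnd := val_nonneg (Fin.tail d)
    have hnw := val_nonneg (Fin.tail w)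
    have hld := val_lt_phi (Fin.tail d)
    have hlw := val_lt_phi (Fin.tail w)
    rcases fin2_cases (w 0) with hw0 | hw0 <;> rcases fin2_cases (d 0) with hd0 | hd0 <;>
      rw [hw0, hd0] at heq <;>
      simp only [Fin.val_zero, Fin.val_one, Nat.cast_zero, Nat.cast_one] at heq <;>
      rcases ht with rfl | rfl | rfl
    -- w0 = 0, d0 = 0
    · exact step 0 (Or.inl rfl) (by linear_combination heq)
    · exact step 1 (Or.inr (Or.inr rfl)) (by linear_combination heq + hs)
    · exfalso; linarith
    -- w0 = 0, d0 = 1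
    · exfalso
      have hD := greedy_zero_lt (m+1) w hg hw0
      rw [hwe, hw0] at hD
      simp only [Fin.val_zero, Nat.cast_zero] at hD
      linarith
    · exact step 0 (Or.inl rfl) (by linear_combination heq + hs)
    · exact step (phi - 1) (Or.inr (Or.inl rfl)) (by linear_combination heq)
    -- w0 = 1, d0 = 0
    · exact step 1 (Or.inr (Or.inr rfl)) (by linear_combination heq)
    · exfalso; nlinarith
    · exfalso; linarith
    -- w0 = 1, d0 = 1
    · exact step 0 (Or.inl rfl) (by linear_combination heq)
    · exact step 1 (Or.inr (Or.inr rfl)) (by linear_combination heq + hs)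
    · exfalso; linarith

theorem class_append_one {n : ℕ} (c : Fin n → Fin 2)
    (hg : Greedy (Fin.snoc c 1)) :
    (∀ d : Fin (n + 1) → Fin 2, val d = val (Fin.snoc c 1) → d (Fin.last n) = 1) ∧
    Nat.card {d : Fin (n + 1) → Fin 2 // val d = val (Fin.snoc c 1)} =
      Nat.card {d : Fin n → Fin 2 // val d = val c} := by
  have part1 : ∀ d : Fin (n + 1) → Fin 2, val d = val (Fin.snoc c 1) →
      d (Fin.last n) = 1 := by
    intro d hd
    have hsl : (Fin.snoc c 1 : Fin (n+1) → Fin 2) (Fin.last n) = 1 := by simp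
    exact key n (Fin.snoc c 1) d hg hsl 0 (Or.inl rfl) (by rw [hd]; ring)
  refine ⟨part1, ?_⟩
  apply Nat.card_congr
  refine ⟨fun d => ⟨Fin.init d.1, ?_⟩, fun e => ⟨Fin.snoc e.1 1, ?_⟩, ?_, ?_⟩
  · have h1 : d.1 (Fin.last n) = 1 := part1 d.1 d.2
    have h2 : val d.1 = val (Fin.init d.1) + ((d.1 (Fin.last n) : ℕ) : ℝ) / phi ^ (n+1) := by
      conv_lhs => rw [← Fin.snoc_init_self d.1]
      rw [val_snoc]
    have h3 : val d.1 = val c + ((1 : ℕ) : ℝ) / phi ^ (n+1) := by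
      rw [d.2, val_snoc]; norm_num
    rw [h1] at h2
    norm_num at h2 h3
    linarith
  · rw [val_snoc, val_snoc, e.2]
  · intro d
    apply Subtype.ext
    show Fin.snoc (Fin.init d.1) 1 = d.1
    conv_rhs => rw [← Fin.snoc_init_self d.1]
    rw [part1 d.1 d.2]
  · intro e
    apply Subtype.ext
    simp
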